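/- For every Dyck path, a valley is symmetric if and only if the two peaks immediately surrounding it (the peak before and the peak after the valley) have equal height; hence the number of symmetric valleys equals the number of pairs of consecutive peaks at the same height. -/

import Mathlib

/-- Height of the vertex after the first `j` steps of the path `w`
(`true` = up-step `u`, `false` = down-step `d`). -/
def hgt (w : List Bool) (j : ℕ) : ℤ :=
  ((w.take j).count true : ℤ) - ((w.take j).count false : ℤ)

/-- `w` is a Dyck word: equally many `u`'s and `d`'s, and every prefix
has at least as many `u`'s as `d`'s. -/
def IsDyckWord (w : List Bool) : Prop :=
  w.count true = w.count false ∧ ∀ j, 0 ≤ hgt w j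

instance : DecidablePred IsDyckWord := fun w => by
  have : IsDyckWord w ↔ (w.count true = w.count false ∧
      ∀ j ∈ List.range (w.length + 1), 0 ≤ hgt w j) := by
    constructor
    · rintro ⟨h1, h2⟩; exact ⟨h1, fun j _ => h2 j⟩
    · rintro ⟨h1, h2⟩
      refine ⟨h1, fun j => ?_⟩
      rcases le_or_gt j w.length with h | h
      · exact h2 j (List.mem_range.mpr (Nat.lt_succ_of_le h))
      · have : w.take j = w := List.take_of_length_le h.le
        have hw : hgt w j = hgt w w.length := by
          unfold hgt
          rw [this, List.take_of_length_le (le_refl _)]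
        rw [hw]
        exact h2 w.length (List.mem_range.mpr (Nat.lt_succ_of_le (le_refl _)))
  exact decidable_of_iff' _ this

/-- there is a peak (an occurrence of `ud`) at positions `i, i+1`. -/
def isPeakB (w : List Bool) (i : ℕ) : Bool :=
  w.getD i false && !(w.getD (i+1) true)

/-- there is a valley (an occurrence of `du`) at positions `i, i+1`. -/
def isValleyB (w : List Bool) (i : ℕ) : Bool :=
  !(w.getD i true) && w.getD (i+1) false

/-- length of the maximal run of `u`'s ending at position `i`. -/
def upRunL (w : List Bool) (i : ℕ) : ℕ :=
  ((List.range (i+1)).takeWhile (fun k => w.getD (i-k) false)).length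

/-- length of the maximal run of `d`'s starting at position `i`. -/
def downRunR (w : List Bool) (i : ℕ) : ℕ :=
  ((List.range (w.length - i)).takeWhile (fun k => !(w.getD (i+k) true))).length

/-- length of the maximal run of `d`'s ending at position `i`. -/
def downRunL (w : List Bool) (i : ℕ) : ℕ :=
  ((List.range (i+1)).takeWhile (fun k => !(w.getD (i-k) true))).length

/-- length of the maximal run of `u`'s starting at position `i`. -/
def upRunR (w : List Bool) (i : ℕ) : ℕ :=
  ((List.range (w.length - i)).takeWhile (fun k => w.getD (i+k) false)).length

/-- The peak at `i` is symmetric: its maximal mountain `u^a d^b` has `a = b`. -/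
def isSymPeakB (w : List Bool) (i : ℕ) : Bool :=
  isPeakB w i && (upRunL w i == downRunR w (i+1))

/-- The peak at `i` is asymmetric: its maximal mountain `u^a d^b` has `a ≠ b`. -/
def isAsymPeakB (w : List Bool) (i : ℕ) : Bool :=
  isPeakB w i && !(upRunL w i == downRunR w (i+1))

/-- weight of the peak at `i`: `min a b` for its maximal mountain `u^a d^b`. -/
def peakWeight (w : List Bool) (i : ℕ) : ℕ :=
  min (upRunL w i) (downRunR w (i+1))

/-- The valley at `i` is symmetric: the maximal `d^a u^b` containing it has `a = b`. -/
def isSymValleyB (w : List Bool) (i : ℕ) : Bool :=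
  isValleyB w i && (downRunL w i == upRunR w (i+1))

/-- weight of the valley at `i`: the largest `j` with `d^j u^j` through the valley. -/
def valleyWeight (w : List Bool) (i : ℕ) : ℕ :=
  min (downRunL w i) (upRunR w (i+1))

def peakCount (w : List Bool) : ℕ := ((List.range w.length).filter (isPeakB w)).length
def spCount (w : List Bool) : ℕ := ((List.range w.length).filter (isSymPeakB w)).length
def apCount (w : List Bool) : ℕ := ((List.range w.length).filter (isAsymPeakB w)).length
def svalCount (w : List Bool) : ℕ := ((List.range w.length).filter (isSymValleyB w)).length

/-- total weight of the symmetric peaks of `w`. -/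
def spWeight (w : List Bool) : ℕ :=
  (((List.range w.length).filter (isSymPeakB w)).map (peakWeight w)).sum

/-- total weight of the asymmetric peaks of `w`. -/
def apWeight (w : List Bool) : ℕ :=
  (((List.range w.length).filter (isAsymPeakB w)).map (peakWeight w)).sum

/-- total weight of the symmetric valleys of `w`. -/
def svWeight (w : List Bool) : ℕ :=
  (((List.range w.length).filter (isSymValleyB w)).map (valleyWeight w)).sum

/-- positions of the peaks of `w`, from left to right. -/
def peakList (w : List Bool) : List ℕ := (List.range w.length).filter (isPeakB w)

/-- positions of the valleys of `w`, from left to right. -/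
def valleyList (w : List Bool) : List ℕ := (List.range w.length).filter (isValleyB w)

/-- heights of the peaks of `w`, from left to right. -/
def peakHeights (w : List Bool) : List ℤ := (peakList w).map (fun i => hgt w (i+1))

/-- heights of the valleys of `w`, from left to right. -/
def valleyHeights (w : List Bool) : List ℤ := (valleyList w).map (fun i => hgt w (i+1))

/-- number of pairs of adjacent equal entries of a list. -/
def eqAdjCount (l : List ℤ) : ℕ :=
  ((l.zip l.tail).filter (fun p => decide (p.1 = p.2))).length

/-- `sp'`: number of pairs of consecutive valleys of `w` at the same height. -/
def spPrime (w : List Bool) : ℕ := eqAdjCount (valleyHeights w)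

/-- all Bool lists of length `m`, as a Finset. -/
def boolLists (m : ℕ) : Finset (List Bool) :=
  Finset.image (fun f : Fin m → Bool => List.ofFn f) Finset.univ

/-- The (finite) set of Dyck words of semilength `n`. -/
def dyckFinset (n : ℕ) : Finset (List Bool) :=
  (boolLists (2*n)).filter (fun w => IsDyckWord w)


def Ust (w : List Bool) (r : ℕ) : Prop := w.getD r false = true
def Dst (w : List Bool) (r : ℕ) : Prop := w.getD r true = false

lemma Ust.lt {w : List Bool} {r} (h : Ust w r) : r < w.length := by
  unfold Ust at h
  by_contra hc
  rw [List.getD_eq_default _ _ (le_of_not_gt hc)] at h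
  simp at h

lemma Dst.lt {w : List Bool} {r} (h : Dst w r) : r < w.length := by
  unfold Dst at h
  by_contra hc
  rw [List.getD_eq_default _ _ (le_of_not_gt hc)] at h
  simp at h

lemma not_Ust_and_Dst {w : List Bool} {r} (hu : Ust w r) (hd : Dst w r) : False := by
  have hl := hu.lt
  unfold Ust at hu; unfold Dst at hd
  rw [List.getD_eq_getElem w false hl] at hu
  rw [List.getD_eq_getElem w true hl] at hd
  rw [hu] at hd; simp at hd

lemma Ust_or_Dst {w : List Bool} {r} (h : r < w.length) : Ust w r ∨ Dst w r := by
  unfold Ust Dst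
  rw [List.getD_eq_getElem w false h, List.getD_eq_getElem w true h]
  rcases Bool.eq_false_or_eq_true w[r] with h' | h'
  · left; exact h'
  · right; exact h'

lemma peak_iff {w : List Bool} {i} : isPeakB w i = true ↔ Ust w i ∧ Dst w (i+1) := by
  simp [isPeakB, Ust, Dst]

lemma valley_iff {w : List Bool} {i} : isValleyB w i = true ↔ Dst w i ∧ Ust w (i+1) := by
  simp [isValleyB, Dst, Ust]

lemma hgt_succ_up {w : List Bool} {j} (h : Ust w j) : hgt w (j+1) = hgt w j + 1 := by
  have hl := h.lt
  unfold Ust at h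
  unfold hgt
  rw [← List.take_concat_get hl, List.concat_eq_append]
  rw [List.getD_eq_getElem w false hl] at h
  simp [List.count_append, h]
  ring

lemma hgt_succ_down {w : List Bool} {j} (h : Dst w j) : hgt w (j+1) = hgt w j - 1 := by
  have hl := h.lt
  unfold Dst at h
  unfold hgt
  rw [← List.take_concat_get hl, List.concat_eq_append]
  rw [List.getD_eq_getElem w true hl] at h
  simp [List.count_append, h]
  ring

lemma hgt_zero (w : List Bool) : hgt w 0 = 0 := by simp [hgt]

lemma hgt_length {w : List Bool} (hw : IsDyckWord w) : hgt w w.length = 0 := by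
  unfold hgt
  rw [List.take_of_length_le (le_refl _)]
  rw [hw.1]; ring

lemma first_up {w : List Bool} (hw : IsDyckWord w) (h : 0 < w.length) : Ust w 0 := by
  rcases Ust_or_Dst h with h' | h'
  · exact h'
  · exfalso
    have h1 := hgt_succ_down h'
    rw [hgt_zero] at h1
    norm_num at h1
    have h2 := hw.2 1
    omega

lemma last_down {w : List Bool} (hw : IsDyckWord w) (h : 0 < w.length) :
    Dst w (w.length - 1) := by
  rcases Ust_or_Dst (by omega : w.length - 1 < w.length) with h' | h'
  · exfalso
    have h1 := hgt_succ_up h'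
    have h2 : w.length - 1 + 1 = w.length := by omega
    rw [h2, hgt_length hw] at h1
    have h3 := hw.2 (w.length - 1)
    omega
  · exact h'

/-- between an up-step and a later down-step there is a peak. -/
lemma peak_between {w : List Bool} : ∀ n a b, b - a ≤ n → Ust w a → Dst w b → a < b →
    ∃ r, a ≤ r ∧ r < b ∧ isPeakB w r = true := by
  intro n
  induction n with
  | zero => intro a b h _ _ hab; omega
  | succ n ih =>
    intro a b h hu hd hab
    have hb := hd.lt
    have ha1 : a + 1 < w.length := by omega
    rcases Ust_or_Dst ha1 with h' | h'
    · have hab' : a + 1 < b := by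
        rcases Nat.lt_or_ge (a+1) b with h2 | h2
        · exact h2
        · exfalso; have : a + 1 = b := by omega
          exact not_Ust_and_Dst h' (this ▸ hd)
      obtain ⟨r, h1, h2, h3⟩ := ih (a+1) b (by omega) h' hd hab'
      exact ⟨r, by omega, h2, h3⟩
    · exact ⟨a, le_refl _, hab, peak_iff.mpr ⟨hu, h'⟩⟩

/-- between a down-step and a later up-step there is a valley. -/
lemma valley_between {w : List Bool} : ∀ n a b, b - a ≤ n → Dst w a → Ust w b → a < b →
    ∃ r, a ≤ r ∧ r < b ∧ isValleyB w r = true := by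
  intro n
  induction n with
  | zero => intro a b h _ _ hab; omega
  | succ n ih =>
    intro a b h hd hu hab
    have hb := hu.lt
    have ha1 : a + 1 < w.length := by omega
    rcases Ust_or_Dst ha1 with h' | h'
    · exact ⟨a, le_refl _, hab, valley_iff.mpr ⟨hd, h'⟩⟩
    · have hab' : a + 1 < b := by
        rcases Nat.lt_or_ge (a+1) b with h2 | h2
        · exact h2
        · exfalso; have : a + 1 = b := by omega
          exact not_Ust_and_Dst (this ▸ hu) h'
      obtain ⟨r, h1, h2, h3⟩ := ih (a+1) b (by omega) h' hu hab'
      exact ⟨r, by omega, h2, h3⟩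

/-- telescoping down a run of down-steps. -/
lemma hgt_run_down {w : List Bool} : ∀ (m j k : ℕ), k = j + m →
    (∀ r, j ≤ r → r < k → Dst w r) → hgt w k = hgt w j - m := by
  intro m
  induction m with
  | zero => intro j k hk _; subst hk; simp
  | succ m ih =>
    intro j k hk h
    have h1 : hgt w (j + m) = hgt w j - m := ih j (j+m) rfl (fun r h1 h2 => h r h1 (by omega))
    have h2 := hgt_succ_down (h (j+m) (by omega) (by omega))
    rw [h1] at h2
    rw [hk]
    push_cast at h2 ⊢
    rw [show j + (m+1) = j + m + 1 from rfl, h2]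
    ring

lemma hgt_run_up {w : List Bool} : ∀ (m j k : ℕ), k = j + m →
    (∀ r, j ≤ r → r < k → Ust w r) → hgt w k = hgt w j + m := by
  intro m
  induction m with
  | zero => intro j k hk _; subst hk; simp
  | succ m ih =>
    intro j k hk h
    have h1 : hgt w (j + m) = hgt w j + m := ih j (j+m) rfl (fun r h1 h2 => h r h1 (by omega))
    have h2 := hgt_succ_up (h (j+m) (by omega) (by omega))
    rw [h1] at h2
    rw [hk]
    push_cast at h2 ⊢
    rw [show j + (m+1) = j + m + 1 from rfl, h2]
    ring

lemma takeWhile_range_length (p : ℕ → Bool) (n m : ℕ) (hm : m < n)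
    (h1 : ∀ k, k < m → p k = true) (h2 : p m = false) :
    ((List.range n).takeWhile p).length = m := by
  have hn : n = m + (n - m) := by omega
  have hrest : n - m = 1 + (n - m - 1) := by omega
  rw [hn, List.range_add]
  have hsplit : List.map (fun x => m + x) (List.range (n - m)) =
      m :: List.map (fun x => m + x) (List.map (fun x => 1 + x) (List.range (n - m - 1))) := by
    rw [hrest, List.range_add]
    simp [List.map_map]
  rw [hsplit]
  have hself : (List.range m).takeWhile p = List.range m := by
    rw [List.takeWhile_eq_self_iff]
    intro x hx
    exact h1 x (List.mem_range.mp hx)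
  rw [List.takeWhile_append, hself]
  simp [List.takeWhile_cons, h2]

section Valley

variable {w : List Bool} {i p q : ℕ}

lemma all_dn_between (hp : isPeakB w p = true) (hv : isValleyB w i = true) (hpi : p < i)
    (hnp : ∀ r, p < r → r < i → isPeakB w r = false) :
    ∀ r, p < r → r ≤ i → Dst w r := by
  obtain ⟨hdi, hui1⟩ := valley_iff.mp hv
  intro r h1 h2
  have hrl : r < w.length := lt_of_le_of_lt h2 hdi.lt
  rcases Ust_or_Dst hrl with h' | h'
  · exfalso
    have hri : r < i := by
      rcases Nat.lt_or_ge r i with h3 | h3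
      · exact h3
      · exact absurd (by omega : r = i) (fun he => not_Ust_and_Dst h' (he ▸ hdi))
    obtain ⟨s, hs1, hs2, hs3⟩ := peak_between (i - r) r i (le_refl _) h' hdi hri
    have := hnp s (by omega) hs2
    rw [hs3] at this; simp at this
  · exact h'

lemma all_up_between (hv : isValleyB w i = true) (hq : isPeakB w q = true) (hiq : i < q)
    (hnq : ∀ r, i < r → r < q → isPeakB w r = false) :
    ∀ r, i < r → r ≤ q → Ust w r := by
  obtain ⟨hdi, hui1⟩ := valley_iff.mp hv
  obtain ⟨huq, hdq1⟩ := peak_iff.mp hq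
  intro r h1 h2
  have hrl : r < w.length := lt_of_le_of_lt h2 huq.lt
  rcases Ust_or_Dst hrl with h' | h'
  · exact h'
  · exfalso
    have hri : i + 1 < r := by
      rcases Nat.lt_or_ge (i+1) r with h3 | h3
      · exact h3
      · exact absurd (by omega : i + 1 = r) (fun he => not_Ust_and_Dst (he ▸ hui1) h')
    obtain ⟨s, hs1, hs2, hs3⟩ := peak_between (r - (i+1)) (i+1) r (le_refl _) hui1 h' hri
    have := hnq s (by omega) (by omega)
    rw [hs3] at this; simp at this

lemma downRunL_eq (hp : isPeakB w p = true) (hv : isValleyB w i = true) (hpi : p < i)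
    (hnp : ∀ r, p < r → r < i → isPeakB w r = false) :
    downRunL w i = i - p := by
  obtain ⟨hup, _⟩ := peak_iff.mp hp
  apply takeWhile_range_length _ _ _ (by omega)
  · intro k hk
    have hd : Dst w (i - k) := all_dn_between hp hv hpi hnp (i - k) (by omega) (by omega)
    unfold Dst at hd
    show (!(w.getD (i - k) true)) = true
    rw [hd]
    rfl
  · have hip : i - (i - p) = p := by omega
    rw [hip]
    have hl := hup.lt
    unfold Ust at hup
    rw [List.getD_eq_getElem w false hl] at hup
    rw [List.getD_eq_getElem w true hl, hup]
    simp

lemma upRunR_eq (hv : isValleyB w i = true) (hq : isPeakB w q = true) (hiq : i < q)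
    (hnq : ∀ r, i < r → r < q → isPeakB w r = false) :
    upRunR w (i+1) = q - i := by
  obtain ⟨huq, hdq1⟩ := peak_iff.mp hq
  have hql : q + 1 < w.length := hdq1.lt
  apply takeWhile_range_length _ _ _ (by omega)
  · intro k hk
    have hu : Ust w (i + 1 + k) := all_up_between hv hq hiq hnq (i+1+k) (by omega) (by omega)
    exact hu
  · have hiq' : i + 1 + (q - i) = q + 1 := by omega
    rw [hiq']
    unfold Dst at hdq1
    rw [List.getD_eq_getElem w true hql] at hdq1
    rw [List.getD_eq_getElem w false hql, hdq1]

lemma part1 (hv : isValleyB w i = true)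
    (hp : isPeakB w p = true) (hpi : p < i)
    (hnp : ∀ r, p < r → r < i → isPeakB w r = false)
    (hq : isPeakB w q = true) (hiq : i < q)
    (hnq : ∀ r, i < r → r < q → isPeakB w r = false) :
    (isSymValleyB w i = true ↔ hgt w (p + 1) = hgt w (q + 1)) := by
  have hdl := downRunL_eq hp hv hpi hnp
  have hur := upRunR_eq hv hq hiq hnq
  have h1 : hgt w (i+1) = hgt w (p+1) - (i - p : ℕ) := by
    apply hgt_run_down (i - p) (p+1) (i+1) (by omega)
    intro r hr1 hr2
    exact all_dn_between hp hv hpi hnp r (by omega) (by omega)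
  have h2 : hgt w (q+1) = hgt w (i+1) + (q - i : ℕ) := by
    apply hgt_run_up (q - i) (i+1) (q+1) (by omega)
    intro r hr1 hr2
    exact all_up_between hv hq hiq hnq r (by omega) (by omega)
  have hsym : isSymValleyB w i = true ↔ downRunL w i = upRunR w (i+1) := by
    simp [isSymValleyB, hv]
  rw [hsym, hdl, hur, h2, h1]
  constructor
  · intro h; rw [h]; push_cast; ring
  · intro h
    have : ((i - p : ℕ) : ℤ) = ((q - i : ℕ) : ℤ) := by omega
    omega

end Valley

def prevP (w : List Bool) (i : ℕ) : ℕ := Nat.findGreatest (fun r => isPeakB w r = true) (i-1)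

open Classical in
noncomputable def nextP (w : List Bool) (i : ℕ) : ℕ :=
  if h : ∃ r, i < r ∧ isPeakB w r = true then Nat.find h else 0

section Spec

variable {w : List Bool} {i : ℕ}

lemma valley_not_peak (hv : isValleyB w i = true) : isPeakB w i = false := by
  obtain ⟨hd, _⟩ := valley_iff.mp hv
  by_contra h
  rw [Bool.not_eq_false] at h
  exact not_Ust_and_Dst (peak_iff.mp h).1 hd

lemma exists_peak_lt (hw : IsDyckWord w) (hv : isValleyB w i = true) :
    ∃ p, p < i ∧ isPeakB w p = true := by
  obtain ⟨hd, _⟩ := valley_iff.mp hv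
  have hl : 0 < w.length := by have := hd.lt; omega
  have hu0 := first_up hw hl
  have hi0 : 0 < i := by
    rcases Nat.eq_zero_or_pos i with h | h
    · exact absurd (not_Ust_and_Dst hu0 (h ▸ hd)) not_false
    · exact h
  obtain ⟨r, _, hr2, hr3⟩ := peak_between i 0 i (by omega) hu0 hd hi0
  exact ⟨r, hr2, hr3⟩

lemma prevP_spec (hw : IsDyckWord w) (hv : isValleyB w i = true) :
    isPeakB w (prevP w i) = true ∧ prevP w i < i ∧
      ∀ r, prevP w i < r → r < i → isPeakB w r = false := by
  obtain ⟨p, hp1, hp2⟩ := exists_peak_lt hw hv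
  have hple : p ≤ i - 1 := by omega
  unfold prevP
  refine ⟨Nat.findGreatest_spec (P := fun r => isPeakB w r = true) hple hp2, ?_, ?_⟩
  · have := Nat.findGreatest_le (P := fun r => isPeakB w r = true) (i-1)
    omega
  · intro r h1 h2
    by_contra h
    rw [Bool.not_eq_false] at h
    exact Nat.findGreatest_is_greatest h1 (by omega) h

lemma exists_peak_gt (hw : IsDyckWord w) (hv : isValleyB w i = true) :
    ∃ r, i < r ∧ isPeakB w r = true := by
  obtain ⟨_, hu⟩ := valley_iff.mp hv
  have hl : i + 1 < w.length := hu.lt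
  have hld := last_down hw (by omega)
  have hne : i + 1 ≠ w.length - 1 := fun he => not_Ust_and_Dst (he ▸ hu) hld
  have hlt : i + 1 < w.length - 1 := by omega
  obtain ⟨r, hr1, hr2, hr3⟩ := peak_between (w.length - 1 - (i+1)) (i+1) (w.length - 1)
    (by omega) hu hld hlt
  exact ⟨r, by omega, hr3⟩

lemma nextP_spec (hw : IsDyckWord w) (hv : isValleyB w i = true) :
    isPeakB w (nextP w i) = true ∧ i < nextP w i ∧
      ∀ r, i < r → r < nextP w i → isPeakB w r = false := by
  have h := exists_peak_gt hw hv
  unfold nextP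
  rw [dif_pos h]
  obtain ⟨h1, h2⟩ := Nat.find_spec h
  refine ⟨h2, h1, ?_⟩
  intro r hr1 hr2
  have := Nat.find_min h hr2
  by_contra hc
  rw [Bool.not_eq_false] at hc
  exact this ⟨hr1, hc⟩

variable {p q : ℕ}

lemma valley_exists_between (hp : isPeakB w p = true) (hq : isPeakB w q = true) (hpq : p < q) :
    ∃ v, p < v ∧ v < q ∧ isValleyB w v = true := by
  obtain ⟨_, hdp⟩ := peak_iff.mp hp
  obtain ⟨huq, _⟩ := peak_iff.mp hq
  have hne : p + 1 ≠ q := fun he => not_Ust_and_Dst (he ▸ huq) hdp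
  have hlt : p + 1 < q := by omega
  obtain ⟨v, hv1, hv2, hv3⟩ := valley_between (q - (p+1)) (p+1) q (by omega) hdp huq hlt
  exact ⟨v, by omega, hv2, hv3⟩

lemma valley_unique_between (hnp : ∀ r, p < r → r < q → isPeakB w r = false)
    {v1 v2 : ℕ} (h11 : p < v1) (h12 : v1 < q) (h13 : isValleyB w v1 = true)
    (h21 : p < v2) (h22 : v2 < q) (h23 : isValleyB w v2 = true) : v1 = v2 := by
  have key : ∀ a b : ℕ, p < a → b < q → a < b →
      isValleyB w a = true → isValleyB w b = true → False := by
    intro a b ha hb hab hva hvb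
    obtain ⟨_, hua⟩ := valley_iff.mp hva
    obtain ⟨hdb, _⟩ := valley_iff.mp hvb
    have hne : a + 1 ≠ b := fun he => not_Ust_and_Dst (he ▸ hua) hdb
    have hlt : a + 1 < b := by omega
    obtain ⟨s, hs1, hs2, hs3⟩ := peak_between (b - (a+1)) (a+1) b (by omega) hua hdb hlt
    have := hnp s (by omega) (by omega)
    rw [hs3] at this; simp at this
  rcases lt_trichotomy v1 v2 with h | h | h
  · exact absurd (key v1 v2 h11 h22 h h13 h23) not_false
  · exact h
  · exact absurd (key v2 v1 h21 h12 h h23 h13) not_false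

end Spec

lemma zip_tail_mem_iff : ∀ (l : List ℕ), l.Pairwise (· < ·) → ∀ p q : ℕ,
    ((p, q) ∈ l.zip l.tail ↔ p ∈ l ∧ q ∈ l ∧ p < q ∧ ∀ r ∈ l, ¬(p < r ∧ r < q))
  | [] , _, p, q => by simp
  | [a], _, p, q => by
      simp only [List.zip, List.tail]
      constructor
      · intro h; simp at h
      · rintro ⟨hp, hq, hpq, _⟩
        simp at hp hq; omega
  | a :: b :: t, hs, p, q => by
      have hab : a < b := (List.pairwise_cons.mp hs).1 b (by simp)
      have halt : ∀ x ∈ b :: t, a < x := (List.pairwise_cons.mp hs).1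
      have hs' : (b :: t).Pairwise (· < ·) := (List.pairwise_cons.mp hs).2
      have hblt : ∀ x ∈ t, b < x := (List.pairwise_cons.mp hs').1
      have ih := zip_tail_mem_iff (b :: t) hs' p q
      have hzip : (a :: b :: t).zip (a :: b :: t).tail
          = (a, b) :: (b :: t).zip ((b :: t).tail) := rfl
      rw [hzip]
      constructor
      · intro h
        rcases List.mem_cons.mp h with h | h
        · have hpa : p = a := by simpa using congrArg Prod.fst h
          have hqb : q = b := by simpa using congrArg Prod.snd h
          subst hpa; subst hqb
          refine ⟨by simp, by simp, hab, ?_⟩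
          intro r hr ⟨h1, h2⟩
          rcases List.mem_cons.mp hr with h3 | h3
          · omega
          · rcases List.mem_cons.mp h3 with h4 | h4
            · omega
            · have := hblt r h4; omega
        · obtain ⟨hp, hq, hpq, hnb⟩ := ih.mp h
          refine ⟨List.mem_cons_of_mem a hp, List.mem_cons_of_mem a hq, hpq, ?_⟩
          intro r hr ⟨h1, h2⟩
          rcases List.mem_cons.mp hr with h3 | h3
          · have := halt p hp; omega
          · exact hnb r h3 ⟨h1, h2⟩
      · rintro ⟨hp, hq, hpq, hnb⟩
        rcases List.mem_cons.mp hp with hpa | hpbt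
        · subst hpa
          have hqbt : q ∈ b :: t := by
            rcases List.mem_cons.mp hq with h | h
            · omega
            · exact h
          have hqb : q = b := by
            rcases List.mem_cons.mp hqbt with h | h
            · exact h
            · exfalso
              have hbq := hblt q h
              exact hnb b (by simp) ⟨hab, hbq⟩
          subst hqb
          exact List.mem_cons_self
        · have hqbt : q ∈ b :: t := by
            have hap := halt p hpbt
            rcases List.mem_cons.mp hq with h | h
            · omega
            · exact h
          apply List.mem_cons_of_mem
          exact ih.mpr ⟨hpbt, hqbt, hpq, fun r hr => hnb r (List.mem_cons_of_mem a hr)⟩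

lemma zip_tail_nodup : ∀ (l : List ℕ), l.Pairwise (· < ·) → (l.zip l.tail).Nodup
  | [] , _ => by simp
  | [a], _ => by simp
  | a :: b :: t, hs => by
      have hs' : (b :: t).Pairwise (· < ·) := (List.pairwise_cons.mp hs).2
      have halt : ∀ x ∈ b :: t, a < x := (List.pairwise_cons.mp hs).1
      have hzip : (a :: b :: t).zip (a :: b :: t).tail
          = (a, b) :: (b :: t).zip ((b :: t).tail) := rfl
      rw [hzip]
      refine List.Nodup.cons ?_ (zip_tail_nodup (b :: t) hs')
      intro hmem
      have h1 := (List.of_mem_zip hmem).1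
      have := halt a h1
      omega

lemma sym_valley (w : List Bool) (i : ℕ) (h : isSymValleyB w i = true) :
    isValleyB w i = true := by
  rw [isSymValleyB, Bool.and_eq_true] at h
  exact h.1

lemma part2 (w : List Bool) (hw : IsDyckWord w) :
    svalCount w = eqAdjCount (peakHeights w) := by
  have hsort : (peakList w).Pairwise (· < ·) :=
    List.Pairwise.filter _ (List.pairwise_lt_range (n := w.length))
  have hmem : ∀ x : ℕ, x ∈ peakList w ↔ isPeakB w x = true := by
    intro x
    simp only [peakList, List.mem_filter, List.mem_range]
    constructor
    · rintro ⟨_, h⟩; exact h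
    · intro h; exact ⟨(peak_iff.mp h).1.lt, h⟩
  have hE : eqAdjCount (peakHeights w) =
      (((peakList w).zip (peakList w).tail).filter
        (fun pq => decide (hgt w (pq.1+1) = hgt w (pq.2+1)))).length := by
    unfold eqAdjCount peakHeights
    rw [← List.map_tail, List.zip_map, List.filter_map, List.length_map]
    congr 1
  have hnd1 : ((List.range w.length).filter (isSymValleyB w)).Nodup :=
    (List.nodup_range (n := w.length)).filter _
  have hnd2 : (((peakList w).zip (peakList w).tail).filter
      (fun pq => decide (hgt w (pq.1+1) = hgt w (pq.2+1)))).Nodup :=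
    (zip_tail_nodup (peakList w) hsort).filter _
  rw [hE, svalCount, ← List.toFinset_card_of_nodup hnd1, ← List.toFinset_card_of_nodup hnd2]
  have hmem1 : ∀ a : ℕ, a ∈ ((List.range w.length).filter (isSymValleyB w)).toFinset ↔
      isSymValleyB w a = true := by
    intro a
    rw [List.mem_toFinset, List.mem_filter, List.mem_range]
    constructor
    · rintro ⟨_, h⟩; exact h
    · intro h
      exact ⟨(valley_iff.mp (sym_valley w a h)).1.lt, h⟩
  have hmem2 : ∀ pq : ℕ × ℕ, pq ∈ (((peakList w).zip (peakList w).tail).filter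
      (fun pq => decide (hgt w (pq.1+1) = hgt w (pq.2+1)))).toFinset ↔
      pq ∈ (peakList w).zip (peakList w).tail ∧ hgt w (pq.1+1) = hgt w (pq.2+1) := by
    intro pq
    rw [List.mem_toFinset, List.mem_filter, decide_eq_true_eq]
  apply Finset.card_bij (fun a _ => (prevP w a, nextP w a))
  · -- maps into target
    intro a ha
    have hsym := (hmem1 a).mp ha
    have hv := sym_valley w a hsym
    obtain ⟨hp, hpa, hnp⟩ := prevP_spec hw hv
    obtain ⟨hq, haq, hnq⟩ := nextP_spec hw hv
    rw [hmem2]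
    constructor
    · rw [zip_tail_mem_iff _ hsort]
      refine ⟨(hmem _).mpr hp, (hmem _).mpr hq, by omega, ?_⟩
      rintro r hr ⟨h1, h2⟩
      have hpk := (hmem r).mp hr
      rcases lt_trichotomy r a with h | h | h
      · rw [hnp r h1 h] at hpk; simp at hpk
      · subst h; rw [valley_not_peak hv] at hpk; simp at hpk
      · rw [hnq r h h2] at hpk; simp at hpk
    · exact (part1 hv hp hpa hnp hq haq hnq).mp hsym
  · -- injective
    intro a1 ha1 a2 ha2 heq
    have hv1 := sym_valley w a1 ((hmem1 a1).mp ha1)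
    have hv2 := sym_valley w a2 ((hmem1 a2).mp ha2)
    obtain ⟨hp1, hpa1, hnp1⟩ := prevP_spec hw hv1
    obtain ⟨hq1, haq1, hnq1⟩ := nextP_spec hw hv1
    obtain ⟨hp2, hpa2, hnp2⟩ := prevP_spec hw hv2
    obtain ⟨hq2, haq2, hnq2⟩ := nextP_spec hw hv2
    have hpe : prevP w a1 = prevP w a2 := congrArg Prod.fst heq
    have hqe : nextP w a1 = nextP w a2 := congrArg Prod.snd heq
    have hnotpeak : ∀ r, prevP w a1 < r → r < nextP w a1 → isPeakB w r = false := by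
      intro r h1 h2
      rcases lt_trichotomy r a1 with h | h | h
      · exact hnp1 r h1 h
      · subst h; exact valley_not_peak hv1
      · exact hnq1 r h h2
    exact valley_unique_between hnotpeak hpa1 haq1 hv1
      (hpe ▸ hpa2) (hqe ▸ haq2) hv2
  · -- surjective
    rintro ⟨p, q⟩ hb
    obtain ⟨hzip, hh⟩ := (hmem2 (p, q)).mp hb
    rw [zip_tail_mem_iff _ hsort] at hzip
    obtain ⟨hpl, hql, hpq, hnb⟩ := hzip
    have hP := (hmem p).mp hpl
    have hQ := (hmem q).mp hql
    have hnp' : ∀ r, p < r → r < q → isPeakB w r = false := by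
      intro r h1 h2
      by_contra hc
      rw [Bool.not_eq_false] at hc
      exact hnb r ((hmem r).mpr hc) ⟨h1, h2⟩
    obtain ⟨v, hpv, hvq, hv⟩ := valley_exists_between hP hQ hpq
    have hsym : isSymValleyB w v = true := by
      apply (part1 hv hP hpv (fun r h1 h2 => hnp' r h1 (by omega))
        hQ hvq (fun r h1 h2 => hnp' r (by omega) h2)).mpr hh
    refine ⟨v, (hmem1 v).mpr hsym, ?_⟩
    obtain ⟨hp', hpv', hnpv⟩ := prevP_spec hw hv
    obtain ⟨hq', hvq', hnqv⟩ := nextP_spec hw hv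
    have hpp : prevP w v = p := by
      rcases lt_trichotomy (prevP w v) p with h | h | h
      · have := hnpv p h hpv
        rw [hP] at this; simp at this
      · exact h
      · have := hnp' (prevP w v) h (by omega)
        rw [hp'] at this; simp at this
    have hqq : nextP w v = q := by
      rcases lt_trichotomy (nextP w v) q with h | h | h
      · have := hnp' (nextP w v) (by omega) h
        rw [hq'] at this; simp at this
      · exact h
      · have := hnqv q hvq h
        rw [hQ] at this; simp at this
    rw [hpp, hqq]


/-- In a Dyck path, a valley is symmetric iff the two peaks
immediately surrounding it have equal height; hence the number of symmetric
valleys equals the number of pairs of consecutive peaks at the same height. -/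
theorem symValley_iff_surrounding_peaks_same_height (w : List Bool) (hw : IsDyckWord w) :
    (∀ i p q : ℕ, isValleyB w i = true →
      isPeakB w p = true → p < i → (∀ r, p < r → r < i → isPeakB w r = false) →
      isPeakB w q = true → i < q → (∀ r, i < r → r < q → isPeakB w r = false) →
      (isSymValleyB w i = true ↔ hgt w (p + 1) = hgt w (q + 1))) ∧
    svalCount w = eqAdjCount (peakHeights w) :=
  ⟨fun _ _ _ hv hp hpi hnp hq hiq hnq => part1 hv hp hpi hnp hq hiq hnq, part2 w hw⟩
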